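/- Let X = {0,1,2}³ and let a, b be equivalence relations on X each with 9 blocks of 3 elements such that a and b permute (a∘b = b∘a) and a ∩ b = Δ. Then the number of equivalence relations A on X with 3 blocks of 9 elements each such that b ⊆ A and a ∩ A = Δ is exactly 36, and the intersection of all such A equals b. -/

import Mathlib

/-- Two equivalence relations permute if their relational compositions agree. -/
def Permutes {X : Type*} (θ ψ : Setoid X) : Prop :=
  ∀ x z : X, (∃ y, θ x y ∧ ψ y z) ↔ (∃ y, ψ x y ∧ θ y z)

namespace Stmt16

open Setoid Function

lemma ncard_mul {α β : Type*} (f : α → β) (s : Set α) (t : Set β) (k : ℕ)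
    (hs : s.Finite) (ht : t.Finite) (hmap : ∀ x ∈ s, f x ∈ t)
    (hfib : ∀ y ∈ t, {x ∈ s | f x = y}.ncard = k) : s.ncard = k * t.ncard := by
  classical
  have h1 : hs.toFinset.card = ∑ y ∈ ht.toFinset, (hs.toFinset.filter fun x => f x = y).card :=
    Finset.card_eq_sum_card_fiberwise (by intro x hx; simp at hx ⊢; exact hmap x hx)
  have h2 : ∀ y ∈ ht.toFinset, (hs.toFinset.filter fun x => f x = y).card = k := by
    intro y hy
    have hy' : y ∈ t := by simpa using hy
    have : {x ∈ s | f x = y} = ↑(hs.toFinset.filter fun x => f x = y) := by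
      ext x; simp [Set.mem_setOf_eq]
    rw [← hfib y hy', this, Set.ncard_coe_finset]
  rw [Finset.sum_congr rfl h2, Finset.sum_const, smul_eq_mul] at h1
  rw [Set.ncard_eq_toFinset_card s hs, Set.ncard_eq_toFinset_card t ht, h1, Nat.mul_comm]

section Main

variable {X : Type*} (a b : Setoid X)

lemma meet_bot {a c : Setoid X} (h : a ⊓ c = ⊥) {x y : X} (hx : a x y) (hy : c x y) : x = y := by
  have h2 : (a ⊓ c) x y := ⟨hx, hy⟩
  rw [h] at h2
  exact h2

/-- The join of two permuting equivalence relations, as their composition. -/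
def comp (hperm : Permutes a b) : Setoid X where
  r x z := ∃ y, a x y ∧ b y z
  iseqv := by
    constructor
    · exact fun x => ⟨x, a.refl' x, b.refl' x⟩
    · rintro x z ⟨y, hxy, hyz⟩
      obtain ⟨u, hu1, hu2⟩ := (hperm x z).mp ⟨y, hxy, hyz⟩
      exact ⟨u, a.symm' hu2, b.symm' hu1⟩
    · rintro x z w ⟨y1, h1, h2⟩ ⟨y2, h3, h4⟩
      obtain ⟨u, hu1, hu2⟩ := (hperm y1 y2).mpr ⟨z, h2, h3⟩
      exact ⟨u, a.trans' h1 hu1, b.trans' hu2 h4⟩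

variable (hperm : Permutes a b)

lemma a_le_comp : a ≤ comp a b hperm := fun {x y} h => ⟨y, h, b.refl' y⟩

lemma b_le_comp : b ≤ comp a b hperm := fun {x y} h => ⟨x, a.refl' x, h⟩

lemma comp_a_right {x y z : X} (h1 : comp a b hperm x y) (h2 : a y z) :
    comp a b hperm x z := by
  obtain ⟨u, hu1, hu2⟩ := h1
  obtain ⟨w, hw1, hw2⟩ := (hperm u z).mpr ⟨y, hu2, h2⟩
  exact ⟨w, a.trans' hu1 hw1, hw2⟩

end Main

section Counting

variable {X : Type*} [Finite X] (a b : Setoid X) (hperm : Permutes a b)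

lemma cls_card {r : Setoid X} {k : ℕ} (h : ∀ c ∈ r.classes, c.ncard = k) (x : X) :
    {z | r x z}.ncard = k := by
  have he : {z | r x z} = {z | r z x} := Set.ext fun z => ⟨fun h => r.symm' h, fun h => r.symm' h⟩
  rw [he]; exact h _ (Setoid.mem_classes r x)

/-- The map from the quotient by `b` to the quotient by the join. -/
def qmap : Quotient b → Quotient (comp a b hperm) :=
  Quotient.lift (Quotient.mk _) fun x y h =>
    Quotient.eq.mpr (b_le_comp a b hperm h)

@[simp] lemma qmap_mk (x : X) :
    qmap a b hperm (Quotient.mk b x) = Quotient.mk (comp a b hperm) x := rfl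

/-- The map from the quotient by `a` to the quotient by the join. -/
def qmapa : Quotient a → Quotient (comp a b hperm) :=
  Quotient.lift (Quotient.mk _) fun x y h =>
    Quotient.eq.mpr (a_le_comp a b hperm h)

@[simp] lemma qmapa_mk (x : X) :
    qmapa a b hperm (Quotient.mk a x) = Quotient.mk (comp a b hperm) x := rfl

lemma comp_cls_ncard (hmeet : a ⊓ b = ⊥) (ha2 : ∀ c ∈ a.classes, c.ncard = 3)
    (hb2 : ∀ c ∈ b.classes, c.ncard = 3) (x : X) :
    {z | comp a b hperm x z}.ncard = 9 := by
  have hinj : Set.InjOn (Quotient.mk b) {y | a x y} := by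
    intro y hy y' hy' hq
    exact meet_bot hmeet (a.trans' (a.symm' hy) hy') (Quotient.eq.mp hq)
  have himg : (Quotient.mk b '' {y | a x y}).ncard = 3 := by
    rw [Set.ncard_image_of_injOn hinj]
    exact cls_card ha2 x
  have h := ncard_mul (Quotient.mk b) {z | comp a b hperm x z}
      (Quotient.mk b '' {y | a x y}) 3 (Set.toFinite _) (Set.toFinite _)
      (fun z hz => by
        obtain ⟨y, hxy, hyz⟩ := hz
        exact ⟨y, hxy, Quotient.eq.mpr hyz⟩) ?_
  · rw [h, himg]
  · rintro y₀ ⟨y, hxy, rfl⟩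
    have he : {z ∈ {z | comp a b hperm x z} | Quotient.mk b z = Quotient.mk b y}
        = {z | b y z} := by
      ext z
      constructor
      · rintro ⟨-, hq⟩; exact b.symm' (Quotient.eq.mp hq)
      · intro hz; exact ⟨⟨y, hxy, hz⟩, Quotient.eq.mpr (b.symm' hz)⟩
    rw [he]; exact cls_card hb2 y

lemma qmap_fiber_ncard (hmeet : a ⊓ b = ⊥) (ha2 : ∀ c ∈ a.classes, c.ncard = 3)
    (hb2 : ∀ c ∈ b.classes, c.ncard = 3) (x : X) :
    {β : Quotient b | qmap a b hperm β = Quotient.mk (comp a b hperm) x}.ncard = 3 := by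
  have h := ncard_mul (Quotient.mk b) {z | comp a b hperm x z}
      {β : Quotient b | qmap a b hperm β = Quotient.mk (comp a b hperm) x} 3
      (Set.toFinite _) (Set.toFinite _)
      (fun z hz => by
        simp only [Set.mem_setOf_eq, qmap_mk]
        exact Quotient.eq.mpr ((comp a b hperm).symm' hz)) ?_
  · rw [comp_cls_ncard a b hperm hmeet ha2 hb2 x] at h
    omega
  · rintro β hβ
    obtain ⟨y, rfl⟩ := Quotient.exists_rep β
    have hyx : comp a b hperm x y :=
      (comp a b hperm).symm' (Quotient.eq.mp (by simpa using hβ))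
    have he : {z ∈ {z | comp a b hperm x z} | Quotient.mk b z = Quotient.mk b y}
        = {z | b y z} := by
      ext z
      constructor
      · rintro ⟨-, hq⟩; exact b.symm' (Quotient.eq.mp hq)
      · intro hz
        exact ⟨(comp a b hperm).trans' hyx (b_le_comp a b hperm hz),
          Quotient.eq.mpr (b.symm' hz)⟩
    rw [he]; exact cls_card hb2 y

lemma qmapa_fiber_ncard (hmeet : a ⊓ b = ⊥) (ha2 : ∀ c ∈ a.classes, c.ncard = 3)
    (hb2 : ∀ c ∈ b.classes, c.ncard = 3) (x : X) :
    {α : Quotient a | qmapa a b hperm α = Quotient.mk (comp a b hperm) x}.ncard = 3 := by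
  have h := ncard_mul (Quotient.mk a) {z | comp a b hperm x z}
      {α : Quotient a | qmapa a b hperm α = Quotient.mk (comp a b hperm) x} 3
      (Set.toFinite _) (Set.toFinite _)
      (fun z hz => by
        simp only [Set.mem_setOf_eq, qmapa_mk]
        exact Quotient.eq.mpr ((comp a b hperm).symm' hz)) ?_
  · rw [comp_cls_ncard a b hperm hmeet ha2 hb2 x] at h
    omega
  · rintro α hα
    obtain ⟨y, rfl⟩ := Quotient.exists_rep α
    have hyx : comp a b hperm x y :=
      (comp a b hperm).symm' (Quotient.eq.mp (by simpa using hα))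
    have he : {z ∈ {z | comp a b hperm x z} | Quotient.mk a z = Quotient.mk a y}
        = {z | a y z} := by
      ext z
      constructor
      · rintro ⟨-, hq⟩; exact a.symm' (Quotient.eq.mp hq)
      · intro hz
        exact ⟨comp_a_right a b hperm hyx hz, Quotient.eq.mpr (a.symm' hz)⟩
    rw [he]; exact cls_card ha2 y

lemma card_quotient {r : Setoid X} {k : ℕ} (h : ∀ x : X, {z | r x z}.ncard = k) :
    Nat.card X = k * Nat.card (Quotient r) := by
  have hm := ncard_mul (Quotient.mk r) (Set.univ : Set X) (Set.univ : Set (Quotient r)) k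
      (Set.toFinite _) (Set.toFinite _) (fun x _ => trivial) ?_
  · rw [Set.ncard_univ, Set.ncard_univ] at hm
    exact hm
  · rintro γ -
    obtain ⟨x, rfl⟩ := Quotient.exists_rep γ
    have he : {z ∈ Set.univ | Quotient.mk r z = Quotient.mk r x} = {z | r x z} := by
      ext z
      constructor
      · rintro ⟨-, hq⟩; exact r.symm' (Quotient.eq.mp hq)
      · intro hz; exact ⟨trivial, Quotient.eq.mpr (r.symm' hz)⟩
    rw [he]; exact h x

end Counting

section Phi

variable {X : Type*} [Finite X] (a b : Setoid X) (hperm : Permutes a b)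

/-- The triple of permutations indexed by `Fin 3`, with identity in position 0. -/
def pi3 (σ τ : Equiv.Perm (Fin 3)) : Fin 3 → Equiv.Perm (Fin 3) := ![1, σ, τ]

lemma fin3_cases (i : Fin 3) : i = 0 ∨ i = 1 ∨ i = 2 := by revert i; decide

variable (e : Quotient (comp a b hperm) ≃ Fin 3)
variable (v : ∀ j : Quotient (comp a b hperm),
    {β : Quotient b // qmap a b hperm β = j} ≃ Fin 3)

/-- The labelling function on the quotient by `b`. -/
def labelQ (σ τ : Equiv.Perm (Fin 3)) (β : Quotient b) : Fin 3 :=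
  pi3 σ τ (e (qmap a b hperm β)) (v (qmap a b hperm β) ⟨β, rfl⟩)

/-- The labelling function on `X`. -/
def label (σ τ : Equiv.Perm (Fin 3)) (x : X) : Fin 3 :=
  labelQ a b hperm e v σ τ (Quotient.mk b x)

/-- The candidate large equivalence relation. -/
def Phi (σ τ : Equiv.Perm (Fin 3)) : Setoid X :=
  Setoid.ker (label a b hperm e v σ τ)

lemma labelQ_eq (σ τ : Equiv.Perm (Fin 3)) (j : Quotient (comp a b hperm))
    (β : Quotient b) (h : qmap a b hperm β = j) :
    labelQ a b hperm e v σ τ β = pi3 σ τ (e j) (v j ⟨β, h⟩) := by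
  subst h; rfl

lemma Phi_rel (σ τ : Equiv.Perm (Fin 3)) (x y : X) :
    Phi a b hperm e v σ τ x y ↔
      label a b hperm e v σ τ x = label a b hperm e v σ τ y := Iff.rfl

lemma b_le_Phi (σ τ : Equiv.Perm (Fin 3)) : b ≤ Phi a b hperm e v σ τ := by
  intro x y h
  show label a b hperm e v σ τ x = label a b hperm e v σ τ y
  unfold label
  rw [Quotient.eq.mpr h]

lemma meet_Phi (hmeet : a ⊓ b = ⊥) (σ τ : Equiv.Perm (Fin 3)) :
    a ⊓ Phi a b hperm e v σ τ = ⊥ := by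
  refine le_antisymm (fun x y h => ?_) bot_le
  obtain ⟨hax, hl⟩ := h
  have hJ : Quotient.mk (comp a b hperm) x = Quotient.mk (comp a b hperm) y :=
    Quotient.eq.mpr (a_le_comp a b hperm hax)
  have hqx : qmap a b hperm (Quotient.mk b x) = Quotient.mk (comp a b hperm) x := rfl
  have hqy : qmap a b hperm (Quotient.mk b y) = Quotient.mk (comp a b hperm) x := by
    rw [qmap_mk, hJ]
  have hl' : label a b hperm e v σ τ x = label a b hperm e v σ τ y := hl
  unfold label at hl'
  rw [labelQ_eq a b hperm e v σ τ _ _ hqx, labelQ_eq a b hperm e v σ τ _ _ hqy] at hl'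
  have h2 := (v (Quotient.mk (comp a b hperm) x)).injective
      ((pi3 σ τ (e (Quotient.mk (comp a b hperm) x))).injective hl')
  have h3 : Quotient.mk b x = Quotient.mk b y := congrArg Subtype.val h2
  exact meet_bot hmeet hax (Quotient.eq.mp h3)

/-- The fibers of the label function intersected with a join class are `b`-classes. -/
lemma label_fiber_piece (σ τ : Equiv.Perm (Fin 3)) (i : Fin 3)
    (j : Quotient (comp a b hperm)) :
    {x ∈ {x | label a b hperm e v σ τ x = i} | Quotient.mk (comp a b hperm) x = j}
      = {x : X | Quotient.mk b x = ((v j).symm ((pi3 σ τ (e j))⁻¹ i)).val} := by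
  ext x
  simp only [Set.mem_setOf_eq, Set.mem_sep_iff]
  constructor
  · rintro ⟨hl, hj⟩
    have hq : qmap a b hperm (Quotient.mk b x) = j := by rw [qmap_mk, hj]
    unfold label at hl
    rw [labelQ_eq a b hperm e v σ τ _ _ hq] at hl
    have : (⟨Quotient.mk b x, hq⟩ : {β : Quotient b // qmap a b hperm β = j})
        = (v j).symm ((pi3 σ τ (e j))⁻¹ i) := by
      apply (v j).injective
      rw [Equiv.apply_symm_apply, Equiv.Perm.inv_def]
      exact (Equiv.eq_symm_apply _).mpr hl
    exact congrArg Subtype.val this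
  · intro hx
    have hq : qmap a b hperm (Quotient.mk b x) = j := by
      rw [hx]; exact ((v j).symm ((pi3 σ τ (e j))⁻¹ i)).prop
    constructor
    · show labelQ a b hperm e v σ τ (Quotient.mk b x) = i
      rw [labelQ_eq a b hperm e v σ τ j _ hq]
      have : (⟨Quotient.mk b x, hq⟩ : {β : Quotient b // qmap a b hperm β = j})
          = (v j).symm ((pi3 σ τ (e j))⁻¹ i) := Subtype.ext hx
      rw [this, Equiv.apply_symm_apply, Equiv.Perm.inv_def, Equiv.apply_symm_apply]
    · show qmap a b hperm (Quotient.mk b x) = j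
      exact hq

lemma label_fiber_ncard (hb2 : ∀ c ∈ b.classes, c.ncard = 3)
    (hQJ : Nat.card (Quotient (comp a b hperm)) = 3)
    (σ τ : Equiv.Perm (Fin 3)) (i : Fin 3) :
    {x | label a b hperm e v σ τ x = i}.ncard = 9 := by
  have h := ncard_mul (Quotient.mk (comp a b hperm))
      {x | label a b hperm e v σ τ x = i} (Set.univ : Set (Quotient (comp a b hperm))) 3
      (Set.toFinite _) (Set.toFinite _) (fun x _ => trivial) ?_
  · rw [h, Set.ncard_univ, hQJ]
  · rintro j -
    rw [label_fiber_piece]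
    obtain ⟨y, hy⟩ := Quotient.exists_rep ((v j).symm ((pi3 σ τ (e j))⁻¹ i)).val
    have he2 : {x : X | Quotient.mk b x = ((v j).symm ((pi3 σ τ (e j))⁻¹ i)).val}
        = {z | b y z} := by
      ext z
      simp only [Set.mem_setOf_eq, ← hy]
      exact ⟨fun hq => b.symm' (Quotient.eq.mp hq), fun hz => Quotient.eq.mpr (b.symm' hz)⟩
    rw [he2]; exact cls_card hb2 y

lemma label_surjective (hb2 : ∀ c ∈ b.classes, c.ncard = 3)
    (hQJ : Nat.card (Quotient (comp a b hperm)) = 3)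
    (σ τ : Equiv.Perm (Fin 3)) : Function.Surjective (label a b hperm e v σ τ) := by
  intro i
  have h9 := label_fiber_ncard a b hperm e v hb2 hQJ σ τ i
  have hne : {x | label a b hperm e v σ τ x = i}.Nonempty := by
    apply Set.nonempty_of_ncard_ne_zero; omega
  exact hne

lemma Phi_classes (hb2 : ∀ c ∈ b.classes, c.ncard = 3)
    (hQJ : Nat.card (Quotient (comp a b hperm)) = 3)
    (σ τ : Equiv.Perm (Fin 3)) :
    (Phi a b hperm e v σ τ).classes = Set.range
      (fun i => {x | label a b hperm e v σ τ x = i}) := by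
  ext c
  constructor
  · rintro ⟨y, rfl⟩
    exact ⟨label a b hperm e v σ τ y, rfl⟩
  · rintro ⟨i, rfl⟩
    obtain ⟨y, rfl⟩ := label_surjective a b hperm e v hb2 hQJ σ τ i
    exact ⟨y, rfl⟩

lemma Phi_classes_ncard (hb2 : ∀ c ∈ b.classes, c.ncard = 3)
    (hQJ : Nat.card (Quotient (comp a b hperm)) = 3)
    (σ τ : Equiv.Perm (Fin 3)) :
    (Phi a b hperm e v σ τ).classes.ncard = 3 := by
  rw [Phi_classes a b hperm e v hb2 hQJ, ← Set.image_univ,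
    Set.ncard_image_of_injOn, Set.ncard_univ, Nat.card_eq_fintype_card, Fintype.card_fin]
  rintro i - i' - hii
  obtain ⟨x, hx⟩ := label_surjective a b hperm e v hb2 hQJ σ τ i
  have h1 : x ∈ (fun i => {x | label a b hperm e v σ τ x = i}) i := hx
  rw [hii] at h1
  exact hx.symm.trans h1

lemma label_rep (σ τ : Equiv.Perm (Fin 3)) (j : Quotient (comp a b hperm)) (i : Fin 3)
    (x : X) (h : Quotient.mk b x = ((v j).symm i).val) :
    label a b hperm e v σ τ x = pi3 σ τ (e j) i := by
  have hq : qmap a b hperm (Quotient.mk b x) = j := by rw [h]; exact ((v j).symm i).prop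
  show labelQ a b hperm e v σ τ (Quotient.mk b x) = _
  rw [labelQ_eq a b hperm e v σ τ j _ hq]
  have h2 : (⟨Quotient.mk b x, hq⟩ : {β : Quotient b // qmap a b hperm β = j})
      = (v j).symm i := Subtype.ext h
  rw [h2, Equiv.apply_symm_apply]

lemma Phi_injective (σ τ σ' τ' : Equiv.Perm (Fin 3))
    (h : Phi a b hperm e v σ τ = Phi a b hperm e v σ' τ') : σ = σ' ∧ τ = τ' := by
  have main : ∀ k i : Fin 3, pi3 σ' τ' k i = pi3 σ τ k i := by
    intro k i
    obtain ⟨x, hx⟩ := Quotient.exists_rep ((v (e.symm k)).symm i).val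
    obtain ⟨y, hy⟩ := Quotient.exists_rep
      ((v (e.symm 0)).symm (pi3 σ τ k i)).val
    have lx : label a b hperm e v σ τ x = pi3 σ τ k i := by
      rw [label_rep a b hperm e v σ τ (e.symm k) i x hx, e.apply_symm_apply]
    have lx' : label a b hperm e v σ' τ' x = pi3 σ' τ' k i := by
      rw [label_rep a b hperm e v σ' τ' (e.symm k) i x hx, e.apply_symm_apply]
    have ly : label a b hperm e v σ τ y = pi3 σ τ k i := by
      rw [label_rep a b hperm e v σ τ (e.symm 0) _ y hy, e.apply_symm_apply]
      rfl
    have ly' : label a b hperm e v σ' τ' y = pi3 σ τ k i := by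
      rw [label_rep a b hperm e v σ' τ' (e.symm 0) _ y hy, e.apply_symm_apply]
      rfl
    have hxy : Phi a b hperm e v σ τ x y := by
      rw [Phi_rel, lx, ly]
    rw [h] at hxy
    rw [Phi_rel, lx', ly'] at hxy
    exact hxy
  constructor
  · refine Equiv.ext fun i => ?_
    have h1 := main 1 i
    simpa [pi3] using h1.symm
  · refine Equiv.ext fun i => ?_
    have h2 := main 2 i
    simpa [pi3] using h2.symm

lemma Phi_surjective (hmeet : a ⊓ b = ⊥)
    (ha2 : ∀ c ∈ a.classes, c.ncard = 3) (hb2 : ∀ c ∈ b.classes, c.ncard = 3)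
    (hX : Nat.card X = 27) (A : Setoid X)
    (hA2 : ∀ c ∈ A.classes, c.ncard = 9) (hbA : b ≤ A) (hmA : a ⊓ A = ⊥) :
    ∃ σ τ : Equiv.Perm (Fin 3), A = Phi a b hperm e v σ τ := by
  classical
  -- the induced map from the quotient by `b` to the quotient by `A`
  obtain ⟨F, hF⟩ : ∃ F : Quotient b → Quotient A,
      ∀ x : X, F (Quotient.mk b x) = Quotient.mk A x :=
    ⟨Quotient.lift (Quotient.mk A) (fun x y h => Quotient.eq.mpr (hbA h)), fun _ => rfl⟩
  -- F is injective on fibers of qmap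
  have g1 : ∀ β γ : Quotient b, qmap a b hperm β = qmap a b hperm γ → F β = F γ → β = γ := by
    intro β γ hq hFeq
    obtain ⟨x, rfl⟩ := Quotient.exists_rep β
    obtain ⟨y, rfl⟩ := Quotient.exists_rep γ
    simp only [qmap_mk] at hq
    rw [hF, hF] at hFeq
    have hJ : comp a b hperm x y := Quotient.eq.mp hq
    have hA : A x y := Quotient.eq.mp hFeq
    by_contra hne
    have hb : ¬ b x y := fun h => hne (Quotient.eq.mpr h)
    set s : Set X := {z | A x z ∧ comp a b hperm x z} with hs
    have hsub1 : {z | b x z} ⊆ s := fun z hz => ⟨hbA hz, b_le_comp a b hperm hz⟩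
    have hsub2 : {z | b y z} ⊆ s := fun z hz =>
      ⟨A.trans' hA (hbA hz), (comp a b hperm).trans' hJ (b_le_comp a b hperm hz)⟩
    have hdisj : Disjoint {z | b x z} {z | b y z} := by
      rw [Set.disjoint_left]
      intro z hz1 hz2
      exact hb (b.trans' hz1 (b.symm' hz2))
    have hle3 : s.ncard ≤ 3 := by
      have := Set.ncard_le_ncard_of_injOn (s := s) (Quotient.mk a)
        (fun z hz => ?_) (fun z hz z' hz' hq' => ?_) (Set.toFinite
          {α : Quotient a | qmapa a b hperm α = Quotient.mk (comp a b hperm) x})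
      · rw [qmapa_fiber_ncard a b hperm hmeet ha2 hb2 x] at this
        exact this
      · show qmapa a b hperm (Quotient.mk a z) = Quotient.mk (comp a b hperm) x
        rw [qmapa_mk]
        exact Quotient.eq.mpr ((comp a b hperm).symm' hz.2)
      · exact meet_bot hmA (Quotient.eq.mp hq') (A.trans' (A.symm' hz.1) hz'.1)
    have h6 : ({z | b x z} ∪ {z | b y z}).ncard = 6 := by
      rw [Set.ncard_union_eq hdisj (Set.toFinite _) (Set.toFinite _),
        cls_card hb2 x, cls_card hb2 y]
    have hle : ({z | b x z} ∪ {z | b y z}).ncard ≤ s.ncard :=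
      Set.ncard_le_ncard (Set.union_subset hsub1 hsub2) (Set.toFinite s)
    omega
  -- cardinalities
  have hcardA : Nat.card (Quotient A) = 3 := by
    have h9 := card_quotient (r := A) (k := 9) (cls_card hA2)
    omega
  have hcardfib : ∀ j : Quotient (comp a b hperm),
      Nat.card {β : Quotient b // qmap a b hperm β = j} = 3 := by
    intro j
    obtain ⟨x, rfl⟩ := Quotient.exists_rep j
    exact (Nat.card_coe_set_eq {β : Quotient b |
      qmap a b hperm β = Quotient.mk (comp a b hperm) x}).trans
      (qmap_fiber_ncard a b hperm hmeet ha2 hb2 x)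
  have hbij : ∀ j : Quotient (comp a b hperm),
      Function.Bijective (fun β : {β : Quotient b // qmap a b hperm β = j} => F β.val) := by
    intro j
    refine (Nat.bijective_iff_injective_and_card _).mpr ⟨?_, by rw [hcardfib, hcardA]⟩
    intro β γ h
    exact Subtype.ext (g1 β.val γ.val (β.prop.trans γ.prop.symm) h)
  obtain ⟨E, hE⟩ : ∃ E : ∀ j : Quotient (comp a b hperm),
      {β : Quotient b // qmap a b hperm β = j} ≃ Quotient A,
      ∀ j β, E j β = F β.val :=
    ⟨fun j => Equiv.ofBijective _ (hbij j), fun j β => rfl⟩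
  set j0 : Quotient (comp a b hperm) := e.symm 0 with hj0
  obtain ⟨g, hg⟩ : ∃ g : Quotient (comp a b hperm) → Equiv.Perm (Fin 3),
      ∀ j i, g j i = v j0 ((E j0).symm (E j ((v j).symm i))) :=
    ⟨fun j => ((v j).symm.trans (E j)).trans ((E j0).symm.trans (v j0)), fun j i => rfl⟩
  have hgj0 : ∀ i, g j0 i = i := by
    intro i
    rw [hg, Equiv.symm_apply_apply, Equiv.apply_symm_apply]
  refine ⟨g (e.symm 1), g (e.symm 2), ?_⟩
  have hgv : ∀ (j : Quotient (comp a b hperm)) (β : {β : Quotient b // qmap a b hperm β = j}),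
      g j (v j β) = v j0 ((E j0).symm (E j β)) := by
    intro j β
    rw [hg, Equiv.symm_apply_apply]
  have hpi : ∀ (j : Quotient (comp a b hperm)) (m : Fin 3),
      pi3 (g (e.symm 1)) (g (e.symm 2)) (e j) m = g j m := by
    intro j m
    rcases fin3_cases (e j) with h | h | h
    · have hj : j = j0 := by rw [hj0, Equiv.eq_symm_apply, h]
      rw [h, hj]
      simp [pi3, hgj0]
    · have hj : j = e.symm 1 := by rw [Equiv.eq_symm_apply, h]
      rw [h, hj]
      simp [pi3]
    · have hj : j = e.symm 2 := by rw [Equiv.eq_symm_apply, h]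
      rw [h, hj]
      simp [pi3]
  have key : ∀ x : X, label a b hperm e v (g (e.symm 1)) (g (e.symm 2)) x
      = v j0 ((E j0).symm (Quotient.mk A x)) := by
    intro x
    have hq : qmap a b hperm (Quotient.mk b x) = Quotient.mk (comp a b hperm) x := rfl
    show labelQ a b hperm e v _ _ (Quotient.mk b x) = _
    rw [labelQ_eq a b hperm e v _ _ _ _ hq]
    rw [show (Quotient.mk A x : Quotient A)
        = E (Quotient.mk (comp a b hperm) x) ⟨Quotient.mk b x, hq⟩ from
      (hF x).symm.trans (hE _ ⟨Quotient.mk b x, hq⟩).symm]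
    rw [← hgv]
    exact hpi _ _
  refine Setoid.ext fun x y => ?_
  rw [Phi_rel, key, key]
  constructor
  · intro h
    exact congrArg _ (congrArg _ (Quotient.eq.mpr h))
  · intro h
    exact Quotient.eq.mp ((E j0).symm.injective ((v j0).injective h))

set_option maxRecDepth 4000 in
lemma key3 : ∀ (k k' i i' : Fin 3), k ≠ k' →
    (∀ σ τ : Equiv.Perm (Fin 3), (![1, σ, τ] k) i = (![1, σ, τ] k') i') → False := by
  decide

lemma pi3_one (k : Fin 3) : pi3 1 1 k = 1 := by
  rcases fin3_cases k with h | h | h <;> rw [h] <;> rfl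

end Phi

end Stmt16

open Stmt16

theorem stmt_16 (a b : Setoid (Fin 3 → Fin 3))
    (ha1 : a.classes.ncard = 9) (ha2 : ∀ c ∈ a.classes, c.ncard = 3)
    (hb1 : b.classes.ncard = 9) (hb2 : ∀ c ∈ b.classes, c.ncard = 3)
    (hperm : Permutes a b) (hmeet : a ⊓ b = ⊥) :
    {A : Setoid (Fin 3 → Fin 3) | A.classes.ncard = 3 ∧
        (∀ c ∈ A.classes, c.ncard = 9) ∧ b ≤ A ∧ a ⊓ A = ⊥}.ncard = 36 ∧
    sInf {A : Setoid (Fin 3 → Fin 3) | A.classes.ncard = 3 ∧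
        (∀ c ∈ A.classes, c.ncard = 9) ∧ b ≤ A ∧ a ⊓ A = ⊥} = b := by
  classical
  have hX : Nat.card (Fin 3 → Fin 3) = 27 := by
    simp [Nat.card_eq_fintype_card]
  have hQJ : Nat.card (Quotient (comp a b hperm)) = 3 := by
    have h := card_quotient (r := comp a b hperm) (k := 9)
      (comp_cls_ncard a b hperm hmeet ha2 hb2)
    omega
  let e : Quotient (comp a b hperm) ≃ Fin 3 := Finite.equivFinOfCardEq hQJ
  have hvcard : ∀ j : Quotient (comp a b hperm),
      Nat.card {β : Quotient b // qmap a b hperm β = j} = 3 := by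
    intro j
    obtain ⟨x, rfl⟩ := Quotient.exists_rep j
    exact (Nat.card_coe_set_eq {β : Quotient b |
      qmap a b hperm β = Quotient.mk (comp a b hperm) x}).trans
      (qmap_fiber_ncard a b hperm hmeet ha2 hb2 x)
  let v : ∀ j : Quotient (comp a b hperm),
      {β : Quotient b // qmap a b hperm β = j} ≃ Fin 3 :=
    fun j => Finite.equivFinOfCardEq (hvcard j)
  set S := {A : Setoid (Fin 3 → Fin 3) | A.classes.ncard = 3 ∧
      (∀ c ∈ A.classes, c.ncard = 9) ∧ b ≤ A ∧ a ⊓ A = ⊥} with hS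
  have hm : ∀ σ τ : Equiv.Perm (Fin 3), Phi a b hperm e v σ τ ∈ S := by
    intro σ τ
    refine ⟨Phi_classes_ncard a b hperm e v hb2 hQJ σ τ, ?_,
      b_le_Phi a b hperm e v σ τ, meet_Phi a b hperm e v hmeet σ τ⟩
    intro c hc
    rw [Phi_classes a b hperm e v hb2 hQJ σ τ] at hc
    obtain ⟨i, rfl⟩ := hc
    exact label_fiber_ncard a b hperm e v hb2 hQJ σ τ i
  have hrange : S = Set.range (fun p : Equiv.Perm (Fin 3) × Equiv.Perm (Fin 3) =>
      Phi a b hperm e v p.1 p.2) := by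
    ext A
    constructor
    · rintro ⟨hA1, hA2, hbA, hmA⟩
      obtain ⟨σ, τ, hστ⟩ := Phi_surjective a b hperm e v hmeet ha2 hb2 hX A hA2 hbA hmA
      exact ⟨(σ, τ), hστ.symm⟩
    · rintro ⟨⟨σ, τ⟩, rfl⟩
      exact hm σ τ
  constructor
  · rw [hrange, ← Set.image_univ, Set.ncard_image_of_injOn, Set.ncard_univ]
    · rw [Nat.card_eq_fintype_card]
      simp [Fintype.card_perm]
      rfl
    · rintro ⟨σ, τ⟩ - ⟨σ', τ'⟩ - hp
      obtain ⟨h1, h2⟩ := Phi_injective a b hperm e v σ τ σ' τ' hp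
      simp [h1, h2]
  · refine le_antisymm (fun x y hxy => ?_) (le_sInf fun A hA => hA.2.2.1)
    have hall : ∀ σ τ : Equiv.Perm (Fin 3),
        label a b hperm e v σ τ x = label a b hperm e v σ τ y :=
      fun σ τ => (Phi_rel a b hperm e v σ τ x y).mp (hxy _ (hm σ τ))
    show b x y
    by_cases hJxy : Quotient.mk (comp a b hperm) x = Quotient.mk (comp a b hperm) y
    · have hqx : qmap a b hperm (Quotient.mk b x) = Quotient.mk (comp a b hperm) x := rfl
      have hqy : qmap a b hperm (Quotient.mk b y) = Quotient.mk (comp a b hperm) x := by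
        rw [qmap_mk, hJxy]
      have h11 := hall 1 1
      unfold label at h11
      rw [labelQ_eq a b hperm e v 1 1 _ _ hqx, labelQ_eq a b hperm e v 1 1 _ _ hqy,
        pi3_one] at h11
      have h2 := (v (Quotient.mk (comp a b hperm) x)).injective
        ((1 : Equiv.Perm (Fin 3)).injective h11)
      exact Quotient.eq.mp (congrArg Subtype.val h2)
    · exfalso
      refine key3 (e (Quotient.mk (comp a b hperm) x)) (e (Quotient.mk (comp a b hperm) y))
        (v _ ⟨Quotient.mk b x, rfl⟩) (v _ ⟨Quotient.mk b y, rfl⟩)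
        (fun h => hJxy (e.injective h)) (fun σ τ => ?_)
      have h := hall σ τ
      unfold label at h
      rw [labelQ_eq a b hperm e v σ τ _ _ (rfl : qmap a b hperm (Quotient.mk b x) = _),
        labelQ_eq a b hperm e v σ τ _ _ (rfl : qmap a b hperm (Quotient.mk b y) = _)] at h
      exact h
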